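/- There is an absolute constant C such that for all nonzero ξ₁, ξ₂ ∈ R^3 and all z ∈ C^4, |Π(ξ₁)Π(−ξ₂)z| ≤ C|z|·θ(ξ₁,ξ₂), where θ(ξ₁,ξ₂) is the angle between ξ₁ and ξ₂. -/

import Mathlib

noncomputable section

open InnerProductGeometry

abbrev E3 := EuclideanSpace ℝ (Fin 3)
abbrev C4 := EuclideanSpace ℂ (Fin 4)

/-- The 4×4 Dirac matrices `α¹, α², α³`, built from the Pauli matrices. -/
def diracAlpha : Fin 3 → Matrix (Fin 4) (Fin 4) ℂ
  | 0 => !![0,0,0,1; 0,0,1,0; 0,1,0,0; 1,0,0,0]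
  | 1 => !![0,0,0,-Complex.I; 0,0,Complex.I,0; 0,-Complex.I,0,0; Complex.I,0,0,0]
  | 2 => !![0,0,1,0; 0,0,0,-1; 1,0,0,0; 0,-1,0,0]

/-- The Dirac projection `Π(ξ) = (1/2)(I + ξ^j α_j / |ξ|)`. -/
def diracPi (ξ : E3) : Matrix (Fin 4) (Fin 4) ℂ :=
  (1/2 : ℂ) • ((1 : Matrix (Fin 4) (Fin 4) ℂ) +
    (‖ξ‖⁻¹ : ℝ) • ∑ j : Fin 3, (ξ j : ℂ) • diracAlpha j)

open scoped Matrix.Norms.L2Operator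

namespace DiracAux

/-- The linear combination `ξ^j α_j`. -/
def AM (ξ : E3) : Matrix (Fin 4) (Fin 4) ℂ :=
  ∑ j : Fin 3, (ξ j : ℂ) • diracAlpha j

lemma AM_sq (ξ : E3) : AM ξ * AM ξ = ((‖ξ‖ ^ 2 : ℝ) : ℂ) • 1 := by
  have hn : (‖ξ‖ ^ 2 : ℝ) = ξ 0 ^ 2 + ξ 1 ^ 2 + ξ 2 ^ 2 := by
    rw [EuclideanSpace.norm_eq, Real.sq_sqrt (by positivity)]
    simp [Fin.sum_univ_three]
  rw [hn]
  ext i j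
  fin_cases i <;> fin_cases j <;>
    simp [AM, diracAlpha, Fin.sum_univ_three, Matrix.mul_apply, Fin.sum_univ_succ,
      Matrix.one_apply, Complex.ext_iff, ← Complex.ofReal_pow] <;>
    constructor <;> first | trivial | (push_cast; ring)


lemma AM_smul (r : ℝ) (ξ : E3) : AM (r • ξ) = (r : ℂ) • AM ξ := by
  simp only [AM, Finset.smul_sum]
  refine Finset.sum_congr rfl fun j _ => ?_
  have : (r • ξ) j = r * ξ j := rfl
  rw [this, smul_smul]; push_cast; ring_nf

lemma AM_neg (ξ : E3) : AM (-ξ) = -AM ξ := by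
  rw [show -ξ = (-1 : ℝ) • ξ by simp, AM_smul]; push_cast; simp

lemma AM_sub (ξ η : E3) : AM (ξ - η) = AM ξ - AM η := by
  simp only [AM, ← Finset.sum_sub_distrib]
  refine Finset.sum_congr rfl fun j _ => ?_
  have : (ξ - η) j = ξ j - η j := rfl
  rw [this]; push_cast [sub_smul]; rfl

/-- abbreviation for the constant -/
def K : ℝ := ∑ j : Fin 3, ‖diracAlpha j‖

lemma K_nonneg : 0 ≤ K := Finset.sum_nonneg fun j _ => norm_nonneg _

lemma coord_le (ξ : E3) (j : Fin 3) : |ξ j| ≤ ‖ξ‖ := by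
  rw [← Real.sqrt_sq_eq_abs, EuclideanSpace.norm_eq]
  apply Real.sqrt_le_sqrt
  calc ξ j ^ 2 = ‖ξ j‖ ^ 2 := by rw [Real.norm_eq_abs, sq_abs]
    _ ≤ ∑ i, ‖ξ i‖ ^ 2 :=
      Finset.single_le_sum (f := fun i => ‖ξ i‖ ^ 2)
        (fun i _ => sq_nonneg _) (Finset.mem_univ j)

lemma norm_AM_le (ξ : E3) : ‖AM ξ‖ ≤ K * ‖ξ‖ := by
  calc ‖AM ξ‖ ≤ ∑ j : Fin 3, ‖(ξ j : ℂ) • diracAlpha j‖ := norm_sum_le _ _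
    _ = ∑ j : Fin 3, |ξ j| * ‖diracAlpha j‖ := by
        refine Finset.sum_congr rfl fun j _ => ?_
        rw [norm_smul, Complex.norm_real, Real.norm_eq_abs]
    _ ≤ ∑ j : Fin 3, ‖ξ‖ * ‖diracAlpha j‖ := by
        refine Finset.sum_le_sum fun j _ => ?_
        exact mul_le_mul_of_nonneg_right (coord_le ξ j) (norm_nonneg _)
    _ = K * ‖ξ‖ := by
        rw [K, Finset.sum_mul]
        exact Finset.sum_congr rfl fun j _ => mul_comm _ _

lemma diracPi_eq (ξ : E3) :
    diracPi ξ = (1/2 : ℂ) • ((1 : Matrix (Fin 4) (Fin 4) ℂ) + (‖ξ‖⁻¹ : ℝ) • AM ξ) := rfl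

lemma diracPi_neg (ξ : E3) :
    diracPi (-ξ) = (1/2 : ℂ) • ((1 : Matrix (Fin 4) (Fin 4) ℂ) - (‖ξ‖⁻¹ : ℝ) • AM ξ) := by
  rw [diracPi_eq, norm_neg, AM_neg, smul_neg, sub_eq_add_neg]

lemma diracPi_mul_diracPi_neg_self (ξ : E3) (hξ : ξ ≠ 0) :
    diracPi ξ * diracPi (-ξ) = 0 := by
  rw [diracPi_eq, diracPi_neg, smul_mul_smul_comm, add_mul, mul_sub, mul_sub, one_mul, mul_one]
  have hB : ((‖ξ‖⁻¹ : ℝ) • AM ξ) * ((‖ξ‖⁻¹ : ℝ) • AM ξ) = (1 : Matrix (Fin 4) (Fin 4) ℂ) := by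
    have hξn : ‖ξ‖ ≠ 0 := norm_ne_zero_iff.mpr hξ
    rw [Matrix.smul_mul, Matrix.mul_smul, AM_sq, ← Complex.coe_smul, ← Complex.coe_smul,
      smul_smul, smul_smul]
    rw [show ((‖ξ‖⁻¹ : ℝ) : ℂ) * ((‖ξ‖⁻¹ : ℝ) : ℂ) * ((‖ξ‖ ^ 2 : ℝ) : ℂ) = 1 by
      have h : (‖ξ‖ : ℂ) ≠ 0 := Complex.ofReal_ne_zero.mpr hξn
      push_cast; field_simp, one_smul]
  rw [hB]
  abel_nf
  simp

end DiracAux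

open DiracAux in
/-- There is an absolute constant `C` such that for all nonzero `ξ₁, ξ₂ ∈ ℝ³` and all
`z ∈ ℂ⁴`, `|Π(ξ₁)Π(−ξ₂)z| ≤ C |z| θ(ξ₁,ξ₂)`. -/
theorem diracPi_mul_diracPi_neg_bound :
    ∃ C : ℝ, 0 < C ∧
      ∀ (ξ₁ ξ₂ : E3), ξ₁ ≠ 0 → ξ₂ ≠ 0 → ∀ z : C4,
        ‖(Matrix.toEuclideanLin (diracPi ξ₁ * diracPi (-ξ₂))) z‖ ≤
          C * ‖z‖ * angle ξ₁ ξ₂ := by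
  refine ⟨(1 + K) ^ 2, pow_pos (by linarith [K_nonneg]) 2, fun ξ₁ ξ₂ h₁ h₂ z => ?_⟩
  have hn₁ : ‖ξ₁‖ ≠ 0 := norm_ne_zero_iff.mpr h₁
  have hn₂ : ‖ξ₂‖ ≠ 0 := norm_ne_zero_iff.mpr h₂
  set u₁ : E3 := ‖ξ₁‖⁻¹ • ξ₁ with hu₁def
  set u₂ : E3 := ‖ξ₂‖⁻¹ • ξ₂ with hu₂def
  have hu₁ : ‖u₁‖ = 1 := by
    rw [hu₁def, norm_smul, Real.norm_eq_abs, abs_of_nonneg (by positivity)]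
    field_simp
  have hu₂ : ‖u₂‖ = 1 := by
    rw [hu₂def, norm_smul, Real.norm_eq_abs, abs_of_nonneg (by positivity)]
    field_simp
  have hA1 : (‖ξ₁‖⁻¹ : ℝ) • AM ξ₁ = AM u₁ := by rw [hu₁def, AM_smul, Complex.coe_smul]
  have hA2 : (‖ξ₂‖⁻¹ : ℝ) • AM ξ₂ = AM u₂ := by rw [hu₂def, AM_smul, Complex.coe_smul]
  -- the key matrix identity
  have key : diracPi ξ₁ * diracPi (-ξ₂)
      = diracPi ξ₁ * ((1/2 : ℂ) • (AM u₁ - AM u₂)) := by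
    have h0 := diracPi_mul_diracPi_neg_self ξ₁ h₁
    calc diracPi ξ₁ * diracPi (-ξ₂)
        = diracPi ξ₁ * diracPi (-ξ₂) - diracPi ξ₁ * diracPi (-ξ₁) := by rw [h0, sub_zero]
      _ = diracPi ξ₁ * (diracPi (-ξ₂) - diracPi (-ξ₁)) := by rw [mul_sub]
      _ = diracPi ξ₁ * ((1/2 : ℂ) • (AM u₁ - AM u₂)) := by
          rw [diracPi_neg, diracPi_neg, ← smul_sub, hA1, hA2]
          congr 1
          congr 1
          abel
  -- norm estimates
  have hle : ∀ (M : Matrix (Fin 4) (Fin 4) ℂ) (w : C4),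
      ‖Matrix.toEuclideanLin M w‖ ≤ ‖M‖ * ‖w‖ := fun M w =>
    ((Matrix.toEuclideanLin.trans LinearMap.toContinuousLinearMap) M).le_opNorm w
  have hone : ‖(1 : Matrix (Fin 4) (Fin 4) ℂ)‖ ≤ 1 := by
    rw [Matrix.cstar_norm_def, map_one]
    exact ContinuousLinearMap.norm_id_le
  have hPi : ‖diracPi ξ₁‖ ≤ (1 + K) / 2 := by
    rw [diracPi_eq, hA1, norm_smul]
    have h1 : ‖(1/2 : ℂ)‖ = 1/2 := by norm_num
    rw [h1]
    have h2 : ‖(1 : Matrix (Fin 4) (Fin 4) ℂ) + AM u₁‖ ≤ 1 + K := by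
      calc ‖(1 : Matrix (Fin 4) (Fin 4) ℂ) + AM u₁‖ ≤ ‖(1 : Matrix (Fin 4) (Fin 4) ℂ)‖ + ‖AM u₁‖ :=
            norm_add_le _ _
        _ ≤ 1 + K := by
            have := norm_AM_le u₁
            rw [hu₁, mul_one] at this
            linarith
    linarith
  have hD : ‖(1/2 : ℂ) • (AM u₁ - AM u₂)‖ ≤ K / 2 * ‖u₁ - u₂‖ := by
    rw [norm_smul]
    have h1 : ‖(1/2 : ℂ)‖ = 1/2 := by norm_num
    rw [h1, ← AM_sub]
    have := norm_AM_le (u₁ - u₂)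
    linarith
  -- angle estimates
  have hang : angle ξ₁ ξ₂ = angle u₁ u₂ := by
    rw [hu₁def, hu₂def, angle_smul_left_of_pos _ _ (by positivity),
      angle_smul_right_of_pos _ _ (by positivity)]
  have hann : 0 ≤ angle u₁ u₂ := angle_nonneg _ _
  have hdiff : ‖u₁ - u₂‖ ≤ angle u₁ u₂ := by
    have hcos : (inner ℝ u₁ u₂ : ℝ) = Real.cos (angle u₁ u₂) := by
      rw [cos_angle, hu₁, hu₂]; simp
    have hsq : ‖u₁ - u₂‖ ^ 2 ≤ (angle u₁ u₂) ^ 2 := by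
      rw [norm_sub_sq_real, hu₁, hu₂, hcos]
      have := Real.one_sub_sq_div_two_le_cos (x := angle u₁ u₂)
      nlinarith
    exact (pow_le_pow_iff_left₀ (norm_nonneg _) hann two_ne_zero).mp hsq
  -- assemble
  rw [key, hang]
  calc ‖Matrix.toEuclideanLin (diracPi ξ₁ * ((1/2 : ℂ) • (AM u₁ - AM u₂))) z‖
      ≤ ‖diracPi ξ₁ * ((1/2 : ℂ) • (AM u₁ - AM u₂))‖ * ‖z‖ := hle _ _
    _ ≤ (‖diracPi ξ₁‖ * ‖(1/2 : ℂ) • (AM u₁ - AM u₂)‖) * ‖z‖ :=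
        mul_le_mul_of_nonneg_right (Matrix.l2_opNorm_mul _ _) (norm_nonneg _)
    _ ≤ (1 + K) ^ 2 * ‖z‖ * angle u₁ u₂ := by
        have hK := K_nonneg
        have hz : (0:ℝ) ≤ ‖z‖ := norm_nonneg _
        have hP0 : (0:ℝ) ≤ ‖diracPi ξ₁‖ := norm_nonneg _
        have hD0 : (0:ℝ) ≤ ‖(1/2 : ℂ) • (AM u₁ - AM u₂)‖ := norm_nonneg _
        have hd0 : (0:ℝ) ≤ ‖u₁ - u₂‖ := norm_nonneg _
        have hDth : ‖(1/2 : ℂ) • (AM u₁ - AM u₂)‖ ≤ K / 2 * angle u₁ u₂ := by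
          calc ‖(1/2 : ℂ) • (AM u₁ - AM u₂)‖ ≤ K / 2 * ‖u₁ - u₂‖ := hD
            _ ≤ K / 2 * angle u₁ u₂ :=
              mul_le_mul_of_nonneg_left hdiff (by linarith)
        nlinarith [mul_le_mul hPi hDth hD0 (by linarith : (0:ℝ) ≤ (1 + K) / 2),
          mul_nonneg (mul_nonneg hP0 hD0) hz]

end
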